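/- arXiv:2005.03949 — 3 statements merged into one kernel-verified Lean document; each statement's English description precedes it below -/
import Mathlib

section
/- Let G be an n×m matrix whose entries G_ij are rational functions over ℂ, each written as num(G_ij)/denom(G_ij) with coprime polynomials, and let s_p ∈ ℂ be a pole of G. Let n_ij be the multiplicity of s_p as a root of denom(G_ij) (so n_ij = 0 if denom(G_ij)(s_p) ≠ 0), and let n_p = max_{i,j} n_ij ≥ 1. Let A ∈ ℂ^{n×m} be the matrix whose (i,j) entry is the limit of (s − s_p)^{n_p} · G_ij(s) as s → s_p (this entry is 0 whenever n_ij < n_p). Then A ≠ 0, and |s − s_p|^{n_p} · σ̄(G(s)) tends to ‖A‖ > 0 as s tends to s_p through points that are not poles of G. In other words, σ̄(G(s)) ≈ a / |s − s_p|^{n_p} near s_p with a = ‖A‖ > 0. -/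
open Polynomial Filter Topology Matrix

/-- The largest singular value `σ̄(M)` of a complex `n × m` matrix, i.e. its operator norm
as a linear map `(ℂ^m, ‖·‖₂) → (ℂ^n, ‖·‖₂)`. -/
noncomputable def sigmaMax {n m : ℕ} (M : Matrix (Fin n) (Fin m) ℂ) : ℝ :=
  ‖LinearMap.toContinuousLinearMap (Matrix.toEuclideanLin M)‖

/-- Entrywise evaluation of a matrix of rational functions at a point `s : ℂ`. -/
noncomputable def evalMat {n m : ℕ} (G : Matrix (Fin n) (Fin m) (RatFunc ℂ)) (s : ℂ) :
    Matrix (Fin n) (Fin m) ℂ :=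
  fun i j => (G i j).eval (RingHom.id ℂ) s

/-- `s` is a pole of the rational matrix `G` if the denominator (in coprime
numerator/denominator form) of at least one entry vanishes at `s` (Definition 1). -/
def IsPole {n m : ℕ} (G : Matrix (Fin n) (Fin m) (RatFunc ℂ)) (s : ℂ) : Prop :=
  ∃ i j, (G i j).denom.eval s = 0

noncomputable def matEquiv (n m : ℕ) :
    Matrix (Fin n) (Fin m) ℂ ≃ₗ[ℂ] (EuclideanSpace ℂ (Fin m) →L[ℂ] EuclideanSpace ℂ (Fin n)) :=
  Matrix.toEuclideanLin.trans LinearMap.toContinuousLinearMap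

lemma sigmaMax_eq_norm_matEquiv {n m : ℕ} (M : Matrix (Fin n) (Fin m) ℂ) :
    sigmaMax M = ‖matEquiv n m M‖ := rfl

lemma continuous_sigmaMax {n m : ℕ} :
    Continuous (fun M : Matrix (Fin n) (Fin m) ℂ => sigmaMax M) :=
  continuous_norm.comp (matEquiv n m).toLinearMap.continuous_of_finiteDimensional

lemma sigmaMax_smul {n m : ℕ} (c : ℂ) (M : Matrix (Fin n) (Fin m) ℂ) :
    sigmaMax (c • M) = ‖c‖ * sigmaMax M := by
  rw [sigmaMax_eq_norm_matEquiv, sigmaMax_eq_norm_matEquiv, LinearEquiv.map_smul, norm_smul]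

lemma sigmaMax_pos {n m : ℕ} {M : Matrix (Fin n) (Fin m) ℂ} (h : M ≠ 0) : 0 < sigmaMax M := by
  rw [sigmaMax_eq_norm_matEquiv, norm_pos_iff]
  exact fun h0 => h ((matEquiv n m).map_eq_zero_iff.mp h0)

/-- **Theorem 1 of the paper.** Let `s_p` be a pole of the rational matrix `G`,
let `n_ij` be the multiplicity of `s_p` as a root of the denominator of `G i j`,
`n_p = max n_ij ≥ 1`, and let `A` be the entrywise limit of `(s - s_p)^{n_p} • G(s)` at `s_p`.
Then `A ≠ 0` and `|s - s_p|^{n_p} * σ̄(G(s)) → ‖A‖ = σ̄(A) > 0` as `s → s_p` through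
non-poles of `G`; i.e. `σ̄(G(s)) ≈ a / |s - s_p|^{n_p}` with `a = ‖A‖ > 0`. -/
theorem sigmaMax_pole_approx {n m : ℕ} (G : Matrix (Fin n) (Fin m) (RatFunc ℂ)) (s_p : ℂ)
    (hpole : IsPole G s_p)
    (np : ℕ)
    (hnp : np = Finset.univ.sup
      (fun p : Fin n × Fin m => ((G p.1 p.2).denom).rootMultiplicity s_p))
    (A : Matrix (Fin n) (Fin m) ℂ)
    (hA : ∀ i j, Filter.Tendsto
      (fun s : ℂ => (s - s_p) ^ np * ((G i j).eval (RingHom.id ℂ) s))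
      (nhdsWithin s_p {s : ℂ | ¬ IsPole G s}) (nhds (A i j))) :
    1 ≤ np ∧
    A ≠ 0 ∧
    Filter.Tendsto (fun s : ℂ => ‖s - s_p‖ ^ np * sigmaMax (evalMat G s))
      (nhdsWithin s_p {s : ℂ | ¬ IsPole G s}) (nhds (sigmaMax A)) ∧
    0 < sigmaMax A := by
  obtain ⟨i0, j0, h0⟩ := hpole
  set l := nhdsWithin s_p {s : ℂ | ¬ IsPole G s} with hl
  have hd00 : (G i0 j0).denom ≠ 0 := (G i0 j0).denom_ne_zero
  have h1 : 1 ≤ np := by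
    rw [hnp]
    calc 1 ≤ ((G i0 j0).denom).rootMultiplicity s_p :=
          (Polynomial.rootMultiplicity_pos hd00).mpr h0
      _ ≤ _ := Finset.le_sup (f := fun p : Fin n × Fin m => ((G p.1 p.2).denom).rootMultiplicity s_p) (Finset.mem_univ (i0, j0))
  -- finiteness of the pole set and non-triviality of the filter
  have hfin : ({s : ℂ | IsPole G s}).Finite := by
    have hsub : {s : ℂ | IsPole G s} ⊆
        ⋃ p : Fin n × Fin m, {s : ℂ | ((G p.1 p.2).denom).IsRoot s} := by
      rintro s ⟨i, j, h⟩
      exact Set.mem_iUnion.2 ⟨(i, j), h⟩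
    exact (Set.finite_iUnion fun p : Fin n × Fin m =>
      Polynomial.finite_setOf_isRoot (RatFunc.denom_ne_zero (G p.1 p.2))).subset hsub
  have hmem : {s : ℂ | ¬ IsPole G s} ∈ 𝓝[≠] s_p := by
    have hclosed : IsClosed ({s : ℂ | IsPole G s} \ {s_p}) :=
      (hfin.subset Set.diff_subset).isClosed
    have h2 : ({s : ℂ | IsPole G s} \ {s_p})ᶜ ∈ 𝓝 s_p :=
      hclosed.isOpen_compl.mem_nhds (by simp)
    filter_upwards [nhdsWithin_le_nhds h2, self_mem_nhdsWithin] with s hs hs'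
    exact fun hp => hs ⟨hp, hs'⟩
  have hle : 𝓝[≠] s_p ≤ l := le_inf nhdsWithin_le_nhds (le_principal_iff.mpr hmem)
  have hne : l.NeBot := Filter.NeBot.mono inferInstance hle
  -- pick an entry realizing the maximal multiplicity
  obtain ⟨p0, -, hp0⟩ := Finset.exists_mem_eq_sup Finset.univ ⟨(i0, j0), Finset.mem_univ _⟩
    (fun p : Fin n × Fin m => ((G p.1 p.2).denom).rootMultiplicity s_p)
  obtain ⟨i, j⟩ := p0
  set d := (G i j).denom with hddef
  set N := (G i j).num with hNdef
  have hd : d ≠ 0 := (G i j).denom_ne_zero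
  have hmult : d.rootMultiplicity s_p = np := by rw [hnp, hp0]
  set q := d /ₘ (X - C s_p) ^ np with hq
  have hqfac : (X - C s_p) ^ np * q = d := by
    rw [hq, ← hmult]
    exact Polynomial.pow_mul_divByMonic_rootMultiplicity_eq d s_p
  have hq0 : q.eval s_p ≠ 0 := by
    rw [hq, ← hmult]
    exact Polynomial.eval_divByMonic_pow_rootMultiplicity_ne_zero s_p hd
  have hdroot : d.eval s_p = 0 := by
    have hpos : 0 < d.rootMultiplicity s_p := hmult ▸ h1
    exact (Polynomial.rootMultiplicity_pos hd).mp hpos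
  have hN0 : N.eval s_p ≠ 0 := by
    intro hN
    obtain ⟨a, b, hab⟩ := (G i j).isCoprime_num_denom
    have := congrArg (Polynomial.eval s_p) hab
    rw [← hNdef, ← hddef] at this
    simp [hN, hdroot] at this
  set c : ℂ := N.eval s_p / q.eval s_p with hcdef
  have hc0 : c ≠ 0 := div_ne_zero hN0 hq0
  have htend : Filter.Tendsto
      (fun s : ℂ => (s - s_p) ^ np * ((G i j).eval (RingHom.id ℂ) s)) l (𝓝 c) := by
    have hcont : Filter.Tendsto (fun s : ℂ => N.eval s / q.eval s) (𝓝 s_p) (𝓝 c) :=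
      (N.continuous.tendsto s_p).div (q.continuous.tendsto s_p) hq0
    refine (hcont.mono_left nhdsWithin_le_nhds).congr' ?_
    filter_upwards [self_mem_nhdsWithin] with s hs
    have hds : d.eval s ≠ 0 := fun h => hs ⟨i, j, h⟩
    have hss : s ≠ s_p := fun h => hs (h ▸ ⟨i0, j0, h0⟩)
    have hsub0 : (s - s_p) ≠ 0 := sub_ne_zero.mpr hss
    have hqs : q.eval s ≠ 0 := by
      intro h
      apply hds
      rw [← hqfac]
      simp [h]
    have heval : (G i j).eval (RingHom.id ℂ) s = N.eval s / d.eval s := by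
      rw [RatFunc.eval, ← hNdef, ← hddef]
      rfl
    rw [heval, ← hqfac, Polynomial.eval_mul, Polynomial.eval_pow, Polynomial.eval_sub,
      Polynomial.eval_X, Polynomial.eval_C]
    field_simp
  have hAij : A i j = c := tendsto_nhds_unique (hA i j) htend
  have hAne : A ≠ 0 := by
    intro h
    apply hc0
    rw [← hAij, h]
    rfl
  -- main convergence
  have hmat : Filter.Tendsto (fun s : ℂ => (s - s_p) ^ np • evalMat G s) l (𝓝 A) := by
    refine tendsto_pi_nhds.mpr ?_
    intro i'
    refine tendsto_pi_nhds.mpr ?_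
    intro j'
    exact hA i' j'
  have hcomp := (continuous_sigmaMax.tendsto A).comp hmat
  refine ⟨h1, hAne, ?_, sigmaMax_pos hAne⟩
  refine hcomp.congr fun s => ?_
  simp only [Function.comp]
  rw [sigmaMax_smul, norm_pow]
end

section
/- Let G be an n×m matrix whose entries are rational functions over ℂ, and let s_p ∈ ℂ be a pole of G. Then σ̄(G(s)) tends to +∞ as s tends to s_p through points that are not poles of G. -/
open Polynomial Filter Topology Matrix

lemma norm_entry_le_sigmaMax {n m : ℕ} (M : Matrix (Fin n) (Fin m) ℂ) (i : Fin n) (j : Fin m) :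
    ‖M i j‖ ≤ sigmaMax M := by
  set L := LinearMap.toContinuousLinearMap (Matrix.toEuclideanLin M) with hL
  set v : EuclideanSpace ℂ (Fin m) := EuclideanSpace.single j (1 : ℂ) with hv'
  have hLv : (L v) i = M i j := by
    have : L v = (WithLp.equiv 2 (Fin n → ℂ)).symm
        (M *ᵥ (WithLp.equiv 2 (Fin m → ℂ)) v) := by
      rw [hL, LinearMap.coe_toContinuousLinearMap']
      exact Matrix.toEuclideanLin_apply M v
    rw [this, hv', show (WithLp.equiv 2 (Fin m → ℂ)) (EuclideanSpace.single j (1 : ℂ)) = Pi.single j 1 from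
      EuclideanSpace.ofLp_single j 1]
    simp [Matrix.mulVec_single_one]
  have h1 : ‖M i j‖ ≤ ‖L v‖ := by
    rw [← hLv, EuclideanSpace.norm_eq]
    have hle : ‖(L v) i‖ ^ 2 ≤ ∑ k, ‖(L v) k‖ ^ 2 :=
      Finset.single_le_sum (f := fun k => ‖(L v) k‖ ^ 2)
        (fun k _ => sq_nonneg _) (Finset.mem_univ i)
    calc ‖(L v) i‖ = Real.sqrt (‖(L v) i‖ ^ 2) := by
          rw [Real.sqrt_sq (norm_nonneg _)]
      _ ≤ _ := Real.sqrt_le_sqrt hle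
  have h2 : ‖L v‖ ≤ ‖L‖ * ‖v‖ := L.le_opNorm v
  have hvn : ‖v‖ = 1 := by simp [hv', EuclideanSpace.norm_single]
  calc ‖M i j‖ ≤ ‖L v‖ := h1
    _ ≤ ‖L‖ * ‖v‖ := h2
    _ = sigmaMax M := by rw [hvn, mul_one]; rfl

/-- **blow-up part of Corollary 1.** If `s_p` is a pole of the rational
matrix `G`, then `σ̄(G(s)) → +∞` as `s → s_p` through points that are not poles of `G`. -/
theorem sigmaMax_tendsto_atTop_of_pole {n m : ℕ} (G : Matrix (Fin n) (Fin m) (RatFunc ℂ))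
    (s_p : ℂ) (hpole : IsPole G s_p) :
    Filter.Tendsto (fun s : ℂ => sigmaMax (evalMat G s))
      (nhdsWithin s_p {s : ℂ | ¬ IsPole G s}) Filter.atTop := by
  obtain ⟨i, j, hd⟩ := hpole
  set p : Polynomial ℂ := (G i j).num
  set q : Polynomial ℂ := (G i j).denom
  -- numerator does not vanish at s_p
  have hnum : p.eval s_p ≠ 0 := by
    intro hp
    have hcop : IsCoprime p q := RatFunc.isCoprime_num_denom (G i j)
    have hdvd1 : (X - C s_p) ∣ p := dvd_iff_isRoot.2 hp
    have hdvd2 : (X - C s_p) ∣ q := dvd_iff_isRoot.2 hd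
    have : IsUnit (X - C s_p) := hcop.isUnit_of_dvd' hdvd1 hdvd2
    exact (Polynomial.not_isUnit_X_sub_C s_p) this
  -- eventually (on the filter) the evaluated entry equals p(s)/q(s) with q(s) ≠ 0
  have hq_ne : ∀ᶠ s in nhdsWithin s_p {s : ℂ | ¬ IsPole G s}, q.eval s ≠ 0 := by
    filter_upwards [self_mem_nhdsWithin] with s hs
    intro h0
    exact hs ⟨i, j, h0⟩
  -- norms
  have hnorm_num : Tendsto (fun s : ℂ => ‖p.eval s‖) (nhdsWithin s_p {s : ℂ | ¬ IsPole G s})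
      (𝓝 ‖p.eval s_p‖) := by
    exact ((p.continuous_aeval.norm).tendsto s_p).mono_left nhdsWithin_le_nhds |>.congr
      (fun s => by simp)
  have hnorm_den : Tendsto (fun s : ℂ => ‖q.eval s‖) (nhdsWithin s_p {s : ℂ | ¬ IsPole G s})
      (𝓝[>] 0) := by
    have h0 : Tendsto (fun s : ℂ => ‖q.eval s‖) (nhdsWithin s_p {s : ℂ | ¬ IsPole G s})
        (𝓝 0) := by
      have := ((q.continuous_aeval.norm).tendsto s_p).mono_left
        (nhdsWithin_le_nhds (s := {s : ℂ | ¬ IsPole G s}))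
      simpa [hd] using this
    refine tendsto_nhdsWithin_iff.2 ⟨h0, ?_⟩
    filter_upwards [hq_ne] with s hs
    exact norm_pos_iff.2 hs
  have hinv : Tendsto (fun s : ℂ => (‖q.eval s‖)⁻¹) (nhdsWithin s_p {s : ℂ | ¬ IsPole G s})
      atTop := hnorm_den.inv_tendsto_nhdsGT_zero
  have hentry : Tendsto (fun s : ℂ => ‖(G i j).eval (RingHom.id ℂ) s‖)
      (nhdsWithin s_p {s : ℂ | ¬ IsPole G s}) atTop := by
    have hmul : Tendsto (fun s : ℂ => ‖p.eval s‖ * (‖q.eval s‖)⁻¹)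
        (nhdsWithin s_p {s : ℂ | ¬ IsPole G s}) atTop :=
      Filter.Tendsto.pos_mul_atTop (norm_pos_iff.2 hnum) hnorm_num hinv
    refine hmul.congr (fun s => ?_)
    rw [RatFunc.eval, show Polynomial.eval₂ (RingHom.id ℂ) s p = p.eval s from rfl,
      show Polynomial.eval₂ (RingHom.id ℂ) s q = q.eval s from rfl, norm_div, div_eq_mul_inv]
  refine tendsto_atTop_mono ?_ hentry
  intro s
  have := norm_entry_le_sigmaMax (evalMat G s) i j
  simpa [evalMat] using this
end

section
/- Let G : [0,1] → (matrices of rational functions over ℂ of size n×m) be a family of rational matrices, let p : [0,1] → ℂ be continuous with p(t) a pole of G(t) for every t ∈ [0,1], let Δ ∈ ℝ and M ∈ ℝ, and suppose that for every t ∈ [0,1] and every ω ∈ ℝ for which Δ + iω is not a pole of G(t) one has σ̄(G(t)(Δ + iω)) ≤ M. Then Re(p(t)) ≠ Δ for all t ∈ [0,1], and Re(p(t)) − Δ has the same sign for all t; in particular, if Re(p(0)) < Δ then Re(p(1)) < Δ, i.e. the pole cannot cross the vertical line {Δ + iω : ω ∈ ℝ}. -/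
open Polynomial Filter Topology Matrix

/-- A coordinate of a vector in Euclidean space is bounded by its norm. -/
lemma coord_le_norm {n : ℕ} (x : EuclideanSpace ℂ (Fin n)) (i : Fin n) : ‖x i‖ ≤ ‖x‖ := by
  rw [EuclideanSpace.norm_eq]
  refine (Real.le_sqrt (norm_nonneg _) (Finset.sum_nonneg fun k _ => sq_nonneg _)).2 ?_
  exact Finset.single_le_sum (f := fun k => ‖x k‖ ^ 2)
    (fun k _ => sq_nonneg _) (Finset.mem_univ i)

/-- Each entry of a matrix is bounded in absolute value by the largest singular value. -/
lemma entry_le_sigmaMax {n m : ℕ} (A : Matrix (Fin n) (Fin m) ℂ) (i : Fin n) (j : Fin m) :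
    ‖A i j‖ ≤ sigmaMax A := by
  set L := LinearMap.toContinuousLinearMap (Matrix.toEuclideanLin A) with hL
  set x : EuclideanSpace ℂ (Fin m) := EuclideanSpace.single j 1 with hx
  have hxnorm : ‖x‖ = 1 := by simp [hx, EuclideanSpace.norm_single]
  have hLx : (L x) i = A i j := by
    show (Matrix.toEuclideanLin A x) i = A i j
    rw [Matrix.toEuclideanLin_apply]
    have : (WithLp.equiv 2 (Fin m → ℂ)) x = Pi.single j 1 := rfl
    simp [show x.ofLp = Pi.single j 1 from this, Matrix.mulVec_single]
  calc ‖A i j‖ = ‖(L x) i‖ := by rw [hLx]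
    _ ≤ ‖L x‖ := coord_le_norm _ _
    _ ≤ ‖L‖ * ‖x‖ := L.le_opNorm x
    _ = sigmaMax A := by rw [hxnorm, mul_one, sigmaMax]

/-- If the operator norm of the evaluation of a rational matrix is uniformly bounded on the
non-pole points of a vertical line, then no pole lies on that line. -/
lemma no_pole_on_line {n m : ℕ} (G : Matrix (Fin n) (Fin m) (RatFunc ℂ)) (Δ M : ℝ)
    (hbound : ∀ ω : ℝ, ¬ IsPole G ((Δ : ℂ) + ω * Complex.I) →
      sigmaMax (evalMat G ((Δ : ℂ) + ω * Complex.I)) ≤ M)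
    (s : ℂ) (hs : s.re = Δ) : ¬ IsPole G s := by
  rintro ⟨i, j, hden⟩
  set ω₀ : ℝ := s.im with hω₀
  have hseq : s = (Δ : ℂ) + ω₀ * Complex.I := by
    apply Complex.ext <;> simp [hs, hω₀]
  -- numerator does not vanish at s (coprimality)
  have hnum : (G i j).num.eval s ≠ 0 := by
    intro h0
    obtain ⟨a, b, hab⟩ := RatFunc.isCoprime_num_denom (G i j)
    have := congrArg (Polynomial.eval s) hab
    simp [h0, hden] at this
  -- the set of non-pole frequencies is dense
  set S : Set ℝ := {ω | ¬ IsPole G ((Δ : ℂ) + ω * Complex.I)} with hS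
  have hSc : Sᶜ.Countable := by
    have : Sᶜ ⊆ ⋃ (i' : Fin n) (j' : Fin m),
        {ω : ℝ | ((Δ : ℂ) + ω * Complex.I) ∈ {z | (G i' j').denom.IsRoot z}} := by
      intro ω hω
      simp only [hS, Set.mem_compl_iff, Set.mem_setOf_eq, not_not] at hω
      obtain ⟨i', j', h⟩ := hω
      exact Set.mem_iUnion.2 ⟨i', Set.mem_iUnion.2 ⟨j', h⟩⟩
    refine (Set.Countable.mono this ?_)
    refine Set.countable_iUnion fun i' => Set.countable_iUnion fun j' => ?_
    have hfin : {z : ℂ | (G i' j').denom.IsRoot z}.Finite :=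
      Polynomial.finite_setOf_isRoot (RatFunc.denom_ne_zero _)
    have hinj : Set.InjOn (fun ω : ℝ => (Δ : ℂ) + ω * Complex.I) Set.univ := by
      intro a _ b _ hab
      have := congrArg Complex.im hab
      simpa using this
    exact ((hfin.preimage (hinj.mono (Set.subset_univ _))).subset
      (fun ω hω => hω)).countable
  have hdense : Dense S := by
    have := hSc.dense_compl ℝ
    rwa [compl_compl] at this
  -- the inequality ‖num‖ ≤ M * ‖denom‖ on S
  set f : ℝ → ℝ := fun ω => ‖(G i j).num.eval ((Δ : ℂ) + ω * Complex.I)‖ with hf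
  set g : ℝ → ℝ := fun ω => M * ‖(G i j).denom.eval ((Δ : ℂ) + ω * Complex.I)‖ with hg
  have hle : ∀ ω ∈ S, f ω ≤ g ω := by
    intro ω hω
    have hnp : ¬ IsPole G ((Δ : ℂ) + ω * Complex.I) := hω
    have hd : (G i j).denom.eval ((Δ : ℂ) + ω * Complex.I) ≠ 0 := by
      intro h; exact hnp ⟨i, j, h⟩
    have hentry : evalMat G ((Δ : ℂ) + ω * Complex.I) i j =
        (G i j).num.eval ((Δ : ℂ) + ω * Complex.I) /
        (G i j).denom.eval ((Δ : ℂ) + ω * Complex.I) := rfl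
    have h1 : ‖evalMat G ((Δ : ℂ) + ω * Complex.I) i j‖ ≤ M :=
      le_trans (entry_le_sigmaMax _ i j) (hbound ω hnp)
    rw [hentry, norm_div] at h1
    have := (div_le_iff₀ (norm_pos_iff.2 hd)).1 h1
    simpa [hf, hg] using this
  -- continuity of f and g
  have hline : Continuous fun ω : ℝ => (Δ : ℂ) + ω * Complex.I :=
    continuous_const.add (Complex.continuous_ofReal.mul continuous_const)
  have hfc : Continuous f := ((G i j).num.continuous.comp hline).norm
  have hgc : Continuous g := continuous_const.mul (((G i j).denom.continuous.comp hline).norm)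
  -- extend the inequality to ω₀ by density
  have hω₀mem : ω₀ ∈ closure S := by rw [hdense.closure_eq]; trivial
  have hfinal : f ω₀ ≤ g ω₀ :=
    le_on_closure hle hfc.continuousOn hgc.continuousOn hω₀mem
  have hzero : ‖(G i j).num.eval s‖ ≤ 0 := by
    simpa [hf, hg, ← hseq, hden] using hfinal
  exact hnum (norm_le_zero_iff.1 hzero)

/-- **Theorem 2 of the paper.** Let `G t` be a family of rational matrices
for `t ∈ [0,1]`, let `p t` be a continuously varying pole of `G t`, and suppose
`σ̄(G t (Δ + iω)) ≤ M` for all `t ∈ [0,1]` and all non-pole points `Δ + iω` of the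
vertical line. Then `Re (p t) ≠ Δ` for all `t`, the sign of `Re (p t) - Δ` is constant,
and in particular if `Re (p 0) < Δ` then `Re (p 1) < Δ`: the pole cannot cross the line. -/
theorem pole_cannot_cross_line {n m : ℕ}
    (G : ℝ → Matrix (Fin n) (Fin m) (RatFunc ℂ)) (p : ℝ → ℂ)
    (hp : ContinuousOn p (Set.Icc (0 : ℝ) 1))
    (hpole : ∀ t ∈ Set.Icc (0 : ℝ) 1, IsPole (G t) (p t))
    (Δ M : ℝ)
    (hbound : ∀ t ∈ Set.Icc (0 : ℝ) 1, ∀ ω : ℝ,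
      ¬ IsPole (G t) ((Δ : ℂ) + ω * Complex.I) →
      sigmaMax (evalMat (G t) ((Δ : ℂ) + ω * Complex.I)) ≤ M) :
    (∀ t ∈ Set.Icc (0 : ℝ) 1, (p t).re ≠ Δ) ∧
    (∀ t ∈ Set.Icc (0 : ℝ) 1, ∀ t' ∈ Set.Icc (0 : ℝ) 1,
      0 < ((p t).re - Δ) * ((p t').re - Δ)) ∧
    ((p 0).re < Δ → (p 1).re < Δ) := by
  have hne : ∀ t ∈ Set.Icc (0 : ℝ) 1, (p t).re ≠ Δ := by
    intro t ht hre
    exact no_pole_on_line (G t) Δ M (hbound t ht) (p t) hre (hpole t ht)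
  have hr : ContinuousOn (fun t => (p t).re - Δ) (Set.Icc (0 : ℝ) 1) :=
    (Complex.continuous_re.comp_continuousOn hp).sub continuousOn_const
  have hsign : ∀ t ∈ Set.Icc (0 : ℝ) 1, ∀ t' ∈ Set.Icc (0 : ℝ) 1,
      0 < ((p t).re - Δ) * ((p t').re - Δ) := by
    intro t ht t' ht'
    by_contra hcon
    push_neg at hcon
    have h1 : (p t).re - Δ ≠ 0 := sub_ne_zero.2 (hne t ht)
    have h2 : (p t').re - Δ ≠ 0 := sub_ne_zero.2 (hne t' ht')
    have hneg : ((p t).re - Δ) * ((p t').re - Δ) < 0 :=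
      lt_of_le_of_ne hcon (mul_ne_zero h1 h2)
    have hsub : Set.uIcc t t' ⊆ Set.Icc (0 : ℝ) 1 :=
      Set.ordConnected_Icc.uIcc_subset ht ht'
    have hcont : ContinuousOn (fun t => (p t).re - Δ) (Set.uIcc t t') := hr.mono hsub
    have h0mem : (0 : ℝ) ∈ Set.uIcc ((p t).re - Δ) ((p t').re - Δ) := by
      rcases mul_neg_iff.1 hneg with ⟨ha, hb⟩ | ⟨ha, hb⟩
      · exact Set.mem_uIcc.2 (Or.inr ⟨hb.le, ha.le⟩)
      · exact Set.mem_uIcc.2 (Or.inl ⟨ha.le, hb.le⟩)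
    obtain ⟨c, hc, hc0⟩ := intermediate_value_uIcc hcont h0mem
    exact hne c (hsub hc) (by linarith [sub_eq_zero.1 hc0])
  refine ⟨hne, hsign, ?_⟩
  intro h0
  by_contra h1
  have h1' : Δ < (p 1).re :=
    lt_of_le_of_ne (not_lt.1 h1) (Ne.symm (hne 1 (by norm_num)))
  have := hsign 0 (by norm_num) 1 (by norm_num)
  nlinarith
end
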